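/- arXiv:1809.03716 — 2 statements merged into one kernel-verified Lean document; each statement's English description precedes it below -/
import Mathlib

section
/- Let (W_∗, F^∗) be an ℝ-mixed Hodge structure on V. Then V_ℂ is the internal direct sum of the Deligne subspaces: V_ℂ = ⊕_{(p,q) ∈ ℤ×ℤ} I^{p,q} (only finitely many I^{p,q} are nonzero). -/
open TensorProduct

noncomputable section

namespace MHS

instance : RingHomSurjective (starRingEnd ℂ) :=
  ⟨fun x => ⟨star x, star_star x⟩⟩

variable (V : Type*) [AddCommGroup V] [Module ℝ V]

/-- The inclusion `v ↦ 1 ⊗ v` of `V` into its complexification `ℂ ⊗[ℝ] V`. -/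
def incl : V →ₗ[ℝ] ℂ ⊗[ℝ] V := TensorProduct.mk ℝ ℂ V 1

/-- Complex conjugation on the complexification `ℂ ⊗[ℝ] V`, as a
conjugate-linear (i.e. `starRingEnd ℂ`-semilinear) map. -/
def conjC : (ℂ ⊗[ℝ] V) →ₛₗ[starRingEnd ℂ] (ℂ ⊗[ℝ] V) where
  toFun := LinearMap.rTensor V (Complex.conjAe.toLinearMap : ℂ →ₗ[ℝ] ℂ)
  map_add' := fun x y => map_add _ x y
  map_smul' := by
    intro c x
    induction x using TensorProduct.induction_on with
    | zero => simp
    | tmul a v =>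
        simp only [TensorProduct.smul_tmul', LinearMap.rTensor_tmul, smul_eq_mul,
          AlgEquiv.toLinearMap_apply, map_mul, starRingEnd_apply]
        rfl
    | add x y hx hy =>
        simp only [smul_add, map_add]
        exact congrArg₂ (· + ·) hx hy

/-- The complexification `W ⊗ ℂ` of a real subspace `W ⊆ V`, as a complex
subspace of `ℂ ⊗[ℝ] V`. -/
def cx (W : Submodule ℝ V) : Submodule ℂ (ℂ ⊗[ℝ] V) :=
  Submodule.span ℂ (incl V '' (W : Set V))

variable {V}

/-- `(W, F)` is an `ℝ`-mixed Hodge structure on `V`:  `W` is an increasing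
exhaustive filtration of `V` by real subspaces, `F` a decreasing exhaustive
filtration of `ℂ ⊗[ℝ] V` by complex subspaces, and for every `n, p` the induced
filtration on `Gr^W_n = (W n ⊗ ℂ)/(W (n-1) ⊗ ℂ)` satisfies the weight `n`
Hodge decomposition conditions (expressed here at the level of preimages in
`W n ⊗ ℂ` of the relevant subspaces of the quotient). -/
structure IsRMHS (W : ℤ → Submodule ℝ V) (F : ℤ → Submodule ℂ (ℂ ⊗[ℝ] V)) : Prop where
  monoW : Monotone W
  antiF : Antitone F
  w_bot : ∃ a : ℤ, ∀ i ≤ a, W i = ⊥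
  w_top : ∃ b : ℤ, ∀ i, b ≤ i → W i = ⊤
  f_top : ∃ a : ℤ, ∀ p ≤ a, F p = ⊤
  f_bot : ∃ b : ℤ, ∀ p, b ≤ p → F p = ⊥
  gr_inf : ∀ n p : ℤ,
      ((F p ⊓ cx V (W n)) ⊔ cx V (W (n-1))) ⊓
        ((((F (n+1-p)).map (conjC V)) ⊓ cx V (W n)) ⊔ cx V (W (n-1)))
      = cx V (W (n-1))
  gr_sup : ∀ n p : ℤ,
      (F p ⊓ cx V (W n)) ⊔ ((((F (n+1-p)).map (conjC V)) ⊓ cx V (W n)) ⊔ cx V (W (n-1)))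
      = cx V (W n)

/-- The subspace `R^{p,q} = (W_{p+q} ⊗ ℂ) ∩ F^p`. -/
def Rpq (W : ℤ → Submodule ℝ V) (F : ℤ → Submodule ℂ (ℂ ⊗[ℝ] V)) (p q : ℤ) :
    Submodule ℂ (ℂ ⊗[ℝ] V) :=
  cx V (W (p + q)) ⊓ F p

/-- The subspace
`L^{p,q} = (W_{p+q} ⊗ ℂ) ∩ σ(F^q) + Σ_{i ≥ 2} (W_{p+q-i} ⊗ ℂ) ∩ σ(F^{q-i+1})`. -/
def Lpq (W : ℤ → Submodule ℝ V) (F : ℤ → Submodule ℂ (ℂ ⊗[ℝ] V)) (p q : ℤ) :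
    Submodule ℂ (ℂ ⊗[ℝ] V) :=
  (cx V (W (p + q)) ⊓ (F q).map (conjC V)) ⊔
    ⨆ i : ℤ, ⨆ _ : 2 ≤ i, (cx V (W (p + q - i)) ⊓ (F (q - i + 1)).map (conjC V))

/-- The Deligne subspace `I^{p,q} = R^{p,q} ∩ L^{p,q}`. -/
def Ipq (W : ℤ → Submodule ℝ V) (F : ℤ → Submodule ℂ (ℂ ⊗[ℝ] V)) (p q : ℤ) :
    Submodule ℂ (ℂ ⊗[ℝ] V) :=
  Rpq W F p q ⊓ Lpq W F p q

end MHS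

namespace DelAbs

variable {M : Type*} [AddCommGroup M] [Module ℂ M]
variable (Wc F G : ℤ → Submodule ℂ M)

/-- abstract L^{p,q} -/
def Lab (p q : ℤ) : Submodule ℂ M :=
  (Wc (p + q) ⊓ G q) ⊔ ⨆ i : ℤ, ⨆ _ : 2 ≤ i, (Wc (p + q - i) ⊓ G (q - i + 1))

/-- abstract I^{p,q} -/
def Iab (p q : ℤ) : Submodule ℂ M := (Wc (p + q) ⊓ F p) ⊓ Lab Wc G p q

structure Hyp where
  monoW : Monotone Wc
  antiF : Antitone F
  antiG : Antitone G
  a : ℤ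
  ha : ∀ n ≤ a, Wc n = ⊥
  b : ℤ
  hb : ∀ n, b ≤ n → Wc n = ⊤
  aF : ℤ
  haF : ∀ p ≤ aF, F p = ⊤
  bF : ℤ
  hbF : ∀ p, bF ≤ p → F p = ⊥
  hsup : ∀ n p, (F p ⊓ Wc n) ⊔ ((G (n + 1 - p) ⊓ Wc n) ⊔ Wc (n - 1)) = Wc n
  hinf : ∀ n p, ((F p ⊓ Wc n) ⊔ Wc (n - 1)) ⊓ ((G (n + 1 - p) ⊓ Wc n) ⊔ Wc (n - 1))
      = Wc (n - 1)

variable {Wc F G}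

lemma D_le (p q i : ℤ) :
    (⨆ _ : 2 ≤ i, (Wc (p + q - i) ⊓ G (q - i + 1))) ≤ Wc (p + q - i) ⊓ G (q - i + 1) :=
  iSup_le fun _ => le_rfl

lemma Iab_le_W (p q : ℤ) : Iab Wc F G p q ≤ Wc (p + q) :=
  inf_le_left.trans inf_le_left

lemma Lab_le (h : Hyp Wc F G) (p q : ℤ) :
    Lab Wc G p q ≤ (Wc (p + q) ⊓ G q) ⊔ Wc (p + q - 2) := by
  refine sup_le le_sup_left (iSup_le fun i => iSup_le fun hi => le_sup_of_le_right ?_)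
  exact inf_le_left.trans (h.monoW (by omega))

end DelAbs

namespace DelAbs
variable {M : Type*} [AddCommGroup M] [Module ℂ M]
variable {Wc F G : ℤ → Submodule ℂ M}

lemma inner_zero (h : Hyp Wc F G) (p q : ℤ) {x : M}
    (hx : x ∈ Iab Wc F G p q) (hxlow : x ∈ Wc (p + q - 1)) : x = 0 := by
  rw [Iab, Submodule.mem_inf, Submodule.mem_inf] at hx
  obtain ⟨⟨hxW, hxF⟩, hxL⟩ := hx
  rw [Lab, Submodule.mem_sup] at hxL
  obtain ⟨x0, hx0, x', hx', hxsum⟩ := hxL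
  rw [Submodule.mem_iSup_iff_exists_finsupp] at hx'
  obtain ⟨f, hf, hfsum⟩ := hx'
  have hD : ∀ i, f i ∈ Wc (p + q - i) ⊓ G (q - i + 1) := fun i => D_le p q i (hf i)
  have key : ∀ k : ℕ, x ∈ Wc (p + q - 1 - k) := by
    intro k; induction k with
    | zero => simpa using hxlow
    | succ k ih =>
      set m : ℤ := p + q - 1 - (k : ℤ) with hm
      set s1 := f.support.filter (fun i => i ≤ (k : ℤ) + 1) with hs1
      set y := x0 + ∑ i ∈ s1, f i with hy
      have hyG : y ∈ G (q - k) := by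
        refine add_mem (h.antiG (by omega) hx0.2) (Submodule.sum_mem _ ?_)
        intro i hi
        have hik : i ≤ (k : ℤ) + 1 := (Finset.mem_filter.mp hi).2
        exact h.antiG (by omega) (hD i).2
      have hxy : x - y ∈ Wc (m - 1) := by
        have hsplit : x - y = ∑ i ∈ f.support.filter (fun i => ¬ i ≤ (k : ℤ) + 1), f i := by
          have h1 : x = x0 + ∑ i ∈ f.support, f i := by
            rw [← hxsum, ← hfsum]; rfl
          rw [h1, hy, ← Finset.sum_filter_add_sum_filter_not f.support
            (fun i => i ≤ (k : ℤ) + 1) f]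
          abel
        rw [hsplit]
        refine Submodule.sum_mem _ ?_
        intro i hi
        have hik : ¬ i ≤ (k : ℤ) + 1 := (Finset.mem_filter.mp hi).2
        exact h.monoW (by omega) (hD i).1
      have hyW : y ∈ Wc m := by
        have : y = x - (x - y) := by abel
        rw [this]
        exact sub_mem ih (h.monoW (by omega) hxy)
      have hmem1 : x ∈ (F p ⊓ Wc m) ⊔ Wc (m - 1) :=
        Submodule.mem_sup_left ⟨hxF, ih⟩
      have hmem2 : x ∈ (G (m + 1 - p) ⊓ Wc m) ⊔ Wc (m - 1) := by
        have hx2 : x = y + (x - y) := by abel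
        rw [hx2]
        refine Submodule.add_mem_sup ⟨?_, hyW⟩ hxy
        have : m + 1 - p = q - k := by omega
        rw [this]; exact hyG
      have := h.hinf m p
      have hxm : x ∈ Wc (m - 1) := by
        rw [← this]; exact ⟨hmem1, hmem2⟩
      have harith : m - 1 = p + q - 1 - ((k : ℕ) + 1 : ℕ) := by push_cast; omega
      rwa [harith] at hxm
  have hk := key (p + q - 1 - h.a).toNat
  have : p + q - 1 - ((p + q - 1 - h.a).toNat : ℤ) ≤ h.a := by
    have := Int.self_le_toNat (p + q - 1 - h.a); omega
  rw [h.ha _ this] at hk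
  simpa using hk

end DelAbs

namespace DelAbs
variable {M : Type*} [AddCommGroup M] [Module ℂ M]
variable {Wc F G : ℤ → Submodule ℂ M}

lemma lift_lemma (h : Hyp Wc F G) (p q : ℤ) {x : M}
    (hxF : x ∈ F p) (hxW : x ∈ Wc (p + q))
    (hx : x ∈ (Wc (p + q) ⊓ G q) ⊔ Wc (p + q - 1)) :
    ∃ y ∈ Iab Wc F G p q, x - y ∈ Wc (p + q - 1) := by
  set n := p + q with hn
  have key : ∀ k : ℕ, ∃ y ℓ r : M, y ∈ F p ∧ y ∈ Wc n ∧ x - y ∈ Wc (n - 1) ∧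
      ℓ ∈ Lab Wc G p q ∧ r ∈ Wc (n - 1 - k) ∧ y = ℓ + r := by
    intro k; induction k with
    | zero =>
      rw [Submodule.mem_sup] at hx
      obtain ⟨u, hu, w, hw, huw⟩ := hx
      refine ⟨x, u, w, hxF, hxW, by simpa using (Wc (n - 1)).zero_mem,
        Submodule.mem_sup_left hu, by simpa using hw, huw.symm⟩
    | succ k ih =>
      obtain ⟨y, ℓ, r, hyF, hyW, hxy, hℓ, hr, hyl⟩ := ih
      set m : ℤ := n - 1 - (k : ℤ) with hm
      have hrm : r ∈ (F p ⊓ Wc m) ⊔ ((G (m + 1 - p) ⊓ Wc m) ⊔ Wc (m - 1)) := by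
        rw [h.hsup m p]
        exact h.monoW (by push_cast; omega) hr
      rw [Submodule.mem_sup] at hrm
      obtain ⟨fe, hfe, rest, hrest, hfr⟩ := hrm
      rw [Submodule.mem_sup] at hrest
      obtain ⟨g, hg, w', hw', hgw⟩ := hrest
      rw [Submodule.mem_inf] at hfe hg
      have hgL : g ∈ Lab Wc G p q := by
        rcases Nat.eq_zero_or_pos k with hk | hk
        · apply Submodule.mem_sup_left
          rw [Submodule.mem_inf]
          refine ⟨h.monoW (by omega) hg.2, ?_⟩
          have he : q = m + 1 - p := by omega
          rw [he]; exact hg.1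
        · apply Submodule.mem_sup_right
          have h2 : (2 : ℤ) ≤ (k : ℤ) + 1 := by omega
          refine Submodule.mem_iSup_of_mem ((k : ℤ) + 1) ?_
          refine Submodule.mem_iSup_of_mem h2 ?_
          rw [Submodule.mem_inf]
          constructor
          · have he : p + q - ((k : ℤ) + 1) = m := by omega
            rw [he]; exact hg.2
          · have he : q - ((k : ℤ) + 1) + 1 = m + 1 - p := by omega
            rw [he]; exact hg.1
      refine ⟨y - fe, ℓ + g, w', sub_mem hyF hfe.1,
        sub_mem hyW (h.monoW (by omega) hfe.2), ?_, add_mem hℓ hgL, ?_, ?_⟩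
      · have he : x - (y - fe) = (x - y) + fe := by abel
        rw [he]; exact add_mem hxy (h.monoW (by omega) hfe.2)
      · have he : n - 1 - ((k : ℕ) + 1 : ℕ) = m - 1 := by push_cast; omega
        rw [he]; exact hw'
      · rw [hyl, ← hfr, ← hgw]; abel
  obtain ⟨y, ℓ, r, hyF, hyW, hxy, hℓ, hr, hyl⟩ := key (n - 1 - h.a).toNat
  have hr0 : r = 0 := by
    have hle : n - 1 - ((n - 1 - h.a).toNat : ℤ) ≤ h.a := by
      have := Int.self_le_toNat (n - 1 - h.a); omega
    rw [h.ha _ hle] at hr; simpa using hr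
  rw [hr0, add_zero] at hyl
  exact ⟨y, Submodule.mem_inf.mpr ⟨Submodule.mem_inf.mpr ⟨hyW, hyF⟩, hyl ▸ hℓ⟩, hxy⟩

end DelAbs

namespace DelAbs
variable {M : Type*} [AddCommGroup M] [Module ℂ M]
variable {Wc F G : ℤ → Submodule ℂ M}

lemma claimB (h : Hyp Wc F G) :
    ∀ (k : ℕ) (n p : ℤ), h.bF ≤ p + k →
      F p ⊓ Wc n ≤ (⨆ pq : ℤ × ℤ, Iab Wc F G pq.1 pq.2) ⊔ Wc (n - 1) := by
  intro k
  induction k with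
  | zero =>
    intro n p hp
    rw [h.hbF p (by simpa using hp)]
    simp
  | succ k ih =>
    intro n p hp
    intro x hx
    rw [Submodule.mem_inf] at hx
    obtain ⟨hxF, hxW⟩ := hx
    have hxsup : x ∈ (F (p + 1) ⊓ Wc n) ⊔ ((G (n + 1 - (p + 1)) ⊓ Wc n) ⊔ Wc (n - 1)) := by
      rw [h.hsup n (p + 1)]; exact hxW
    rw [Submodule.mem_sup] at hxsup
    obtain ⟨aa, haa, rest, hrest, har⟩ := hxsup
    rw [Submodule.mem_sup] at hrest
    obtain ⟨g, hg, w, hw, hgw⟩ := hrest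
    rw [Submodule.mem_inf] at haa hg
    -- y := x - aa satisfies the lifting hypotheses with q := n - p
    have hqn : p + (n - p) = n := by omega
    have hyF : x - aa ∈ F p := sub_mem hxF (h.antiF (by omega) haa.1)
    have hyW : x - aa ∈ Wc (p + (n - p)) := by rw [hqn]; exact sub_mem hxW haa.2
    have hyGW : x - aa ∈ (Wc (p + (n - p)) ⊓ G (n - p)) ⊔ Wc (p + (n - p) - 1) := by
      have he : x - aa = g + w := by rw [← har, ← hgw]; abel
      rw [he, hqn]
      refine Submodule.add_mem_sup (Submodule.mem_inf.mpr ⟨hg.2, ?_⟩) hw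
      have he2 : n - p = n + 1 - (p + 1) := by omega
      rw [he2]; exact hg.1
    obtain ⟨z, hz, hyz⟩ := lift_lemma h p (n - p) hyF hyW hyGW
    have haaS : aa ∈ (⨆ pq : ℤ × ℤ, Iab Wc F G pq.1 pq.2) ⊔ Wc (n - 1) := by
      refine ih n (p + 1) (by push_cast; omega) ?_
      exact Submodule.mem_inf.mpr ⟨haa.1, haa.2⟩
    have hzS : z ∈ (⨆ pq : ℤ × ℤ, Iab Wc F G pq.1 pq.2) ⊔ Wc (n - 1) :=
      Submodule.mem_sup_left (Submodule.mem_iSup_of_mem (p, n - p) hz)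
    have hrS : x - aa - z ∈ (⨆ pq : ℤ × ℤ, Iab Wc F G pq.1 pq.2) ⊔ Wc (n - 1) := by
      apply Submodule.mem_sup_right
      rw [hqn] at hyz; exact hyz
    have he : x = aa + z + (x - aa - z) := by abel
    rw [he]
    exact add_mem (add_mem haaS hzS) hrS

lemma iSup_eq_top (h : Hyp Wc F G) :
    (⨆ pq : ℤ × ℤ, Iab Wc F G pq.1 pq.2) = ⊤ := by
  set S := ⨆ pq : ℤ × ℤ, Iab Wc F G pq.1 pq.2 with hS
  have main : ∀ n, h.a ≤ n → Wc n ≤ S := by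
    refine Int.le_induction ?_ ?_
    · rw [h.ha _ le_rfl]; exact bot_le
    · intro n hn ihn
      set p : ℤ := min h.aF h.bF with hp
      have h1 : F p ⊓ Wc (n + 1) ≤ S ⊔ Wc (n + 1 - 1) :=
        claimB h (h.bF - p).toNat (n + 1) p
          (by have := Int.self_le_toNat (h.bF - p); omega)
      have h2 : Wc (n + 1) ≤ S ⊔ Wc n := by
        intro x hx
        have := h1 (Submodule.mem_inf.mpr ⟨by rw [h.haF p (by omega)]; trivial, hx⟩)
        simpa using this
      exact h2.trans (sup_le le_rfl ihn)
  rw [eq_top_iff, ← h.hb (max h.a h.b) (le_max_right _ _)]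
  exact main _ (le_max_left _ _)

end DelAbs

namespace DelAbs
variable {M : Type*} [AddCommGroup M] [Module ℂ M]
variable {Wc F G : ℤ → Submodule ℂ M}

/-- Independence of the `I^{p,q}` with `p + q = n`, modulo `Wc (n-1)`. -/
lemma level_indep (h : Hyp Wc F G) (n : ℤ) :
    ∀ (t : Finset (ℤ × ℤ)) (x : ℤ × ℤ → M),
      (∀ pq ∈ t, pq.1 + pq.2 = n) → (∀ pq ∈ t, x pq ∈ Iab Wc F G pq.1 pq.2) →
      (∑ pq ∈ t, x pq) ∈ Wc (n - 1) → ∀ pq ∈ t, x pq = 0 := by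
  intro t
  induction t using Finset.strongInductionOn with
  | _ t ih =>
    intro x hlev hmem hsum pq hpq
    rcases Finset.eq_empty_or_nonempty t with rfl | hne
    · simp at hpq
    -- the element of `t` with maximal first coordinate
    have hne' : (t.image Prod.fst).Nonempty := hne.image _
    set p0 : ℤ := (t.image Prod.fst).max' hne' with hp0
    obtain ⟨pq0, hpq0t, hpq01⟩ := Finset.mem_image.mp ((t.image Prod.fst).max'_mem hne')
    have hmax : ∀ qq ∈ t, qq.1 ≤ p0 :=
      fun qq hqq => Finset.le_max' _ _ (Finset.mem_image_of_mem _ hqq)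
    have huniq : ∀ qq ∈ t, qq ≠ pq0 → qq.1 < p0 := by
      intro qq hqq hne2
      rcases lt_or_eq_of_le (hmax qq hqq) with hlt | heq
      · exact hlt
      · exfalso; apply hne2
        have h1 : qq.1 = pq0.1 := by rw [heq, hpq01]
        have h2 : qq.2 = pq0.2 := by
          have := hlev qq hqq; have := hlev pq0 hpq0t; omega
        exact Prod.ext h1 h2
    -- show x pq0 ∈ Wc (n - 1), hence x pq0 = 0
    have hx0mem := hmem pq0 hpq0t
    rw [Iab, Submodule.mem_inf, Submodule.mem_inf] at hx0mem
    obtain ⟨⟨hx0W, hx0F⟩, hx0L⟩ := hx0mem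
    have hlev0 : pq0.1 + pq0.2 = n := hlev pq0 hpq0t
    have hmem1 : x pq0 ∈ (F p0 ⊓ Wc n) ⊔ Wc (n - 1) := by
      apply Submodule.mem_sup_left
      rw [Submodule.mem_inf]
      have hpq01' : pq0.1 = p0 := hpq01
      exact ⟨hpq01' ▸ hx0F, by rw [← hlev0]; exact hx0W⟩
    have hmem2 : x pq0 ∈ (G (n + 1 - p0) ⊓ Wc n) ⊔ Wc (n - 1) := by
      have he : x pq0 = (∑ qq ∈ t, x qq) - ∑ qq ∈ t.erase pq0, x qq := by
        rw [Finset.sum_erase_eq_sub hpq0t]; abel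
      rw [he]
      refine sub_mem (Submodule.mem_sup_right (h.monoW (by omega) hsum)) ?_
      refine Submodule.sum_mem _ ?_
      intro qq hqq
      have hqq' : qq ∈ t := Finset.mem_of_mem_erase hqq
      have hlt : qq.1 < p0 := huniq qq hqq' (Finset.ne_of_mem_erase hqq)
      have hL : x qq ∈ Lab Wc G qq.1 qq.2 := by
        have := hmem qq hqq'
        rw [Iab, Submodule.mem_inf] at this
        exact this.2
      have hL' := Lab_le h qq.1 qq.2 hL
      rw [Submodule.mem_sup] at hL'
      obtain ⟨u, hu, w, hw, huw⟩ := hL'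
      rw [Submodule.mem_inf] at hu
      rw [← huw]
      refine add_mem (Submodule.mem_sup_left (Submodule.mem_inf.mpr ⟨?_, ?_⟩))
        (Submodule.mem_sup_right (h.monoW (by have := hlev qq hqq'; omega) hw))
      · refine h.antiG ?_ hu.2
        have := hlev qq hqq'; omega
      · rw [← hlev qq hqq']; exact hu.1
    have hx0low : x pq0 ∈ Wc (n - 1) := by
      rw [← h.hinf n p0]; exact Submodule.mem_inf.mpr ⟨hmem1, hmem2⟩
    have hx0 : x pq0 = 0 := by
      refine inner_zero h pq0.1 pq0.2 (hmem pq0 hpq0t) ?_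
      rw [hlev0]; exact hx0low
    -- now conclude for every element of `t`
    rcases eq_or_ne pq pq0 with rfl | hnepq
    · exact hx0
    · refine ih (t.erase pq0) (Finset.erase_ssubset hpq0t) x
        (fun qq hqq => hlev qq (Finset.mem_of_mem_erase hqq))
        (fun qq hqq => hmem qq (Finset.mem_of_mem_erase hqq)) ?_ pq
        (Finset.mem_erase.mpr ⟨hnepq, hpq⟩)
      rw [Finset.sum_erase_eq_sub hpq0t, hx0, sub_zero]
      exact hsum

/-- Global independence: a finite sum of elements of the `I^{p,q}` vanishing forces all
terms to vanish. -/
lemma global_indep (h : Hyp Wc F G) :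
    ∀ (s : Finset (ℤ × ℤ)) (x : ℤ × ℤ → M),
      (∀ pq ∈ s, x pq ∈ Iab Wc F G pq.1 pq.2) → (∑ pq ∈ s, x pq) = 0 →
      ∀ pq ∈ s, x pq = 0 := by
  intro s
  induction s using Finset.strongInductionOn with
  | _ s ih =>
    intro x hmem hsum pq hpq
    rcases Finset.eq_empty_or_nonempty s with rfl | hne
    · simp at hpq
    have hne' : (s.image fun qq : ℤ × ℤ => qq.1 + qq.2).Nonempty := hne.image _
    set n : ℤ := (s.image fun qq : ℤ × ℤ => qq.1 + qq.2).max' hne' with hn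
    have hmax : ∀ qq ∈ s, qq.1 + qq.2 ≤ n := fun qq hqq =>
      Finset.le_max' _ _ (Finset.mem_image_of_mem (fun qq : ℤ × ℤ => qq.1 + qq.2) hqq)
    set t : Finset (ℤ × ℤ) := s.filter (fun qq => qq.1 + qq.2 = n) with ht
    set r : Finset (ℤ × ℤ) := s.filter (fun qq => ¬ qq.1 + qq.2 = n) with hr
    have hsplit : ∑ qq ∈ t, x qq + ∑ qq ∈ r, x qq = 0 := by
      rw [ht, hr, Finset.sum_filter_add_sum_filter_not]; exact hsum
    have hrW : ∑ qq ∈ r, x qq ∈ Wc (n - 1) := by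
      refine Submodule.sum_mem _ ?_
      intro qq hqq
      rw [hr, Finset.mem_filter] at hqq
      refine h.monoW ?_ (Iab_le_W qq.1 qq.2 (hmem qq hqq.1))
      have := hmax qq hqq.1; omega
    have htW : ∑ qq ∈ t, x qq ∈ Wc (n - 1) := by
      have he : ∑ qq ∈ t, x qq = -∑ qq ∈ r, x qq := by
        rw [eq_neg_iff_add_eq_zero]; exact hsplit
      rw [he]; exact neg_mem hrW
    have htzero : ∀ qq ∈ t, x qq = 0 := by
      refine level_indep h n t x ?_ ?_ htW
      · intro qq hqq; exact (Finset.mem_filter.mp hqq).2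
      · intro qq hqq; exact hmem qq (Finset.mem_filter.mp hqq).1
    by_cases hpqn : pq.1 + pq.2 = n
    · exact htzero pq (Finset.mem_filter.mpr ⟨hpq, hpqn⟩)
    · -- element of r; recurse on r ⊂ s
      have htne : t.Nonempty := by
        obtain ⟨qq0, hqq0s, hqq0⟩ := Finset.mem_image.mp ((s.image _).max'_mem hne')
        exact ⟨qq0, Finset.mem_filter.mpr ⟨hqq0s, hqq0⟩⟩
      have hrss : r ⊂ s := by
        rw [hr, Finset.filter_ssubset]
        obtain ⟨qq0, hqq0⟩ := htne
        rw [ht, Finset.mem_filter] at hqq0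
        exact ⟨qq0, hqq0.1, by simpa using hqq0.2⟩
      refine ih r hrss x (fun qq hqq => hmem qq (Finset.mem_filter.mp hqq).1) ?_ pq
        (Finset.mem_filter.mpr ⟨hpq, hpqn⟩)
      have : ∑ qq ∈ t, x qq = 0 := Finset.sum_eq_zero htzero
      rw [this, zero_add] at hsplit
      exact hsplit

lemma indep (h : Hyp Wc F G) :
    iSupIndep (fun pq : ℤ × ℤ => Iab Wc F G pq.1 pq.2) := by
  intro pq0
  rw [disjoint_iff_inf_le]
  intro x hx
  rw [Submodule.mem_inf] at hx
  obtain ⟨hx0, hxs⟩ := hx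
  rw [Submodule.mem_iSup_iff_exists_finsupp] at hxs
  obtain ⟨f, hf, hfsum⟩ := hxs
  have hf' : ∀ pq, f pq ∈ Iab Wc F G pq.1 pq.2 := by
    intro pq
    have hle : (⨆ _ : pq ≠ pq0, Iab Wc F G pq.1 pq.2) ≤ Iab Wc F G pq.1 pq.2 :=
      iSup_le fun _ => le_rfl
    exact hle (hf pq)
  have hfpq0 : f pq0 = 0 := by
    have := hf pq0
    have hbot : (⨆ _ : pq0 ≠ pq0, Iab Wc F G pq0.1 pq0.2) = ⊥ := by simp
    rw [hbot] at this; simpa using this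
  have hpq0supp : pq0 ∉ f.support := by
    simp [Finsupp.mem_support_iff, hfpq0]
  set x' : ℤ × ℤ → M := fun pq => if pq = pq0 then -x else f pq with hx'
  have hzero : ∀ pq ∈ insert pq0 f.support, x' pq = 0 := by
    refine global_indep h _ x' ?_ ?_
    · intro pq hpq
      show (if pq = pq0 then -x else f pq) ∈ Iab Wc F G pq.1 pq.2
      by_cases hc : pq = pq0
      · rw [if_pos hc, hc]; exact neg_mem hx0
      · rw [if_neg hc]; exact hf' pq
    · rw [Finset.sum_insert hpq0supp]
      have h1 : x' pq0 = -x := if_pos rfl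
      have h2 : ∑ pq ∈ f.support, x' pq = x := by
        rw [← hfsum, Finsupp.sum]
        refine Finset.sum_congr rfl ?_
        intro pq hpq
        show (if pq = pq0 then -x else f pq) = f pq
        exact if_neg (fun hc : pq = pq0 => hpq0supp (hc ▸ hpq))
      rw [h1, h2]; simp
  have hfin : (if pq0 = pq0 then -x else f pq0) = 0 :=
    hzero pq0 (Finset.mem_insert_self _ _)
  rw [if_pos rfl, neg_eq_zero] at hfin
  simpa using hfin

end DelAbs

section Concrete
open TensorProduct
variable {V : Type*} [AddCommGroup V] [Module ℝ V]

lemma MHS.cx_mono {A B : Submodule ℝ V} (h : A ≤ B) : MHS.cx V A ≤ MHS.cx V B :=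
  Submodule.span_mono (Set.image_mono h)

lemma MHS.cx_bot : MHS.cx V (⊥ : Submodule ℝ V) = ⊥ := by
  rw [MHS.cx, Submodule.span_eq_bot]
  rintro x ⟨v, hv, rfl⟩
  simp only [SetLike.mem_coe, Submodule.mem_bot] at hv
  rw [hv]
  exact map_zero _

lemma MHS.cx_top : MHS.cx V (⊤ : Submodule ℝ V) = ⊤ := by
  rw [eq_top_iff]
  intro x _
  induction x using TensorProduct.induction_on with
  | zero => exact zero_mem _
  | tmul a v =>
    have h1 : MHS.incl V v ∈ MHS.cx V ⊤ :=
      Submodule.subset_span ⟨v, by trivial, rfl⟩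
    have h2 : a ⊗ₜ[ℝ] v = a • ((1 : ℂ) ⊗ₜ[ℝ] v) := by
      rw [TensorProduct.smul_tmul', smul_eq_mul, mul_one]
    rw [h2]
    exact Submodule.smul_mem _ a h1
  | add x y hx hy => exact add_mem (hx trivial) (hy trivial)

lemma MHS.conjC_conjC (x : ℂ ⊗[ℝ] V) : MHS.conjC V (MHS.conjC V x) = x := by
  induction x using TensorProduct.induction_on with
  | zero => simp
  | tmul a v =>
    show LinearMap.rTensor V _ (LinearMap.rTensor V _ (a ⊗ₜ[ℝ] v)) = a ⊗ₜ[ℝ] v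
    simp [LinearMap.rTensor_tmul]
  | add x y hx hy =>
    rw [map_add, map_add, hx, hy]

lemma MHS.conjC_map_top :
    (⊤ : Submodule ℂ (ℂ ⊗[ℝ] V)).map (MHS.conjC V) = ⊤ := by
  rw [Submodule.map_top, LinearMap.range_eq_top]
  exact fun x => ⟨MHS.conjC V x, MHS.conjC_conjC x⟩

end Concrete


/-- For an `ℝ`-mixed Hodge structure `(W, F)` on `V`, the
complexification `V_ℂ` is the internal direct sum of the Deligne subspaces
`I^{p,q}`, and only finitely many of them are nonzero. -/
theorem deligne_splitting_isInternal
    (V : Type*) [AddCommGroup V] [Module ℝ V] [FiniteDimensional ℝ V]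
    (W : ℤ → Submodule ℝ V) (F : ℤ → Submodule ℂ (ℂ ⊗[ℝ] V))
    (h : MHS.IsRMHS W F) :
    DirectSum.IsInternal (fun pq : ℤ × ℤ => MHS.Ipq W F pq.1 pq.2) ∧
    {pq : ℤ × ℤ | MHS.Ipq W F pq.1 pq.2 ≠ ⊥}.Finite := by
  classical
  obtain ⟨a, ha⟩ := h.w_bot
  obtain ⟨b, hb⟩ := h.w_top
  obtain ⟨aF, haF⟩ := h.f_top
  obtain ⟨bF, hbF⟩ := h.f_bot
  have hyp : DelAbs.Hyp (fun n => MHS.cx V (W n)) F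
      (fun q => (F q).map (MHS.conjC V)) :=
    { monoW := fun i j hij => MHS.cx_mono (h.monoW hij)
      antiF := h.antiF
      antiG := fun i j hij => Submodule.map_mono (h.antiF hij)
      a := a
      ha := fun n hn => by rw [ha n hn, MHS.cx_bot]
      b := b
      hb := fun n hn => by rw [hb n hn, MHS.cx_top]
      aF := aF
      haF := haF
      bF := bF
      hbF := hbF
      hsup := h.gr_sup
      hinf := h.gr_inf }
  have heq : (fun pq : ℤ × ℤ => MHS.Ipq W F pq.1 pq.2) =
      (fun pq : ℤ × ℤ => DelAbs.Iab (fun n => MHS.cx V (W n)) F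
        (fun q => (F q).map (MHS.conjC V)) pq.1 pq.2) := rfl
  have hindep : iSupIndep (fun pq : ℤ × ℤ => MHS.Ipq W F pq.1 pq.2) := by
    rw [heq]; exact DelAbs.indep hyp
  have hint : DirectSum.IsInternal (fun pq : ℤ × ℤ => MHS.Ipq W F pq.1 pq.2) := by
    rw [DirectSum.isInternal_submodule_iff_iSupIndep_and_iSup_eq_top]
    refine ⟨hindep, ?_⟩
    rw [heq]; exact DelAbs.iSup_eq_top hyp
  refine ⟨hint, ?_⟩
  haveI : Module.Finite ℂ (ℂ ⊗[ℝ] V) := Module.Finite.base_change ℝ ℂ V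
  haveI hfty : Fintype {pq : ℤ × ℤ // MHS.Ipq W F pq.1 pq.2 ≠ ⊥} :=
    hindep.fintypeNeBotOfFiniteDimensional
  have hfin : Finite ↥{pq : ℤ × ℤ | MHS.Ipq W F pq.1 pq.2 ≠ ⊥} :=
    Finite.of_fintype {pq : ℤ × ℤ // MHS.Ipq W F pq.1 pq.2 ≠ ⊥}
  exact Set.finite_coe_iff.mp hfin
end
end

section
/- Let (W_∗, F^∗) be an ℝ-mixed Hodge structure on V. Then for all integers p,q, σ(I^{p,q}) ⊆ I^{q,p} + Σ_{r+s < p+q} I^{r,s}; that is, the conjugate of I^{p,q} is congruent to I^{q,p} modulo the sum of the Deligne subspaces of strictly smaller total weight. -/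
open TensorProduct

noncomputable section

namespace MHS

variable {V : Type*} [AddCommGroup V] [Module ℝ V]

lemma conjC_tmul (a : ℂ) (v : V) : conjC V (a ⊗ₜ[ℝ] v) = (starRingEnd ℂ a) ⊗ₜ[ℝ] v := rfl

lemma conjC_conjC_s4 (x : ℂ ⊗[ℝ] V) : conjC V (conjC V x) = x := by
  induction x using TensorProduct.induction_on with
  | zero => simp
  | tmul a v => rw [conjC_tmul, conjC_tmul]; simp
  | add x y hx hy => rw [map_add, map_add, hx, hy]

lemma cx_mono_s4 {A B : Submodule ℝ V} (hAB : A ≤ B) : cx V A ≤ cx V B :=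
  Submodule.span_mono (Set.image_mono hAB)

lemma cx_bot_s4 : cx V (⊥ : Submodule ℝ V) = ⊥ := by
  apply le_antisymm _ bot_le
  rw [cx, Submodule.span_le]
  rintro x ⟨v, hv, rfl⟩
  simp only [Submodule.bot_coe, Set.mem_singleton_iff] at hv
  simp [hv, incl]

lemma conjC_mem_cx {A : Submodule ℝ V} {x : ℂ ⊗[ℝ] V} (hx : x ∈ cx V A) :
    conjC V x ∈ cx V A := by
  induction hx using Submodule.span_induction with
  | mem x hx =>
      obtain ⟨v, hv, rfl⟩ := hx
      have : conjC V (incl V v) = incl V v := by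
        show conjC V ((1:ℂ) ⊗ₜ[ℝ] v) = _
        rw [conjC_tmul]; simp [incl, TensorProduct.mk_apply]
      rw [this]
      exact Submodule.subset_span ⟨v, hv, rfl⟩
  | zero => simp
  | add x y _ _ hx hy => rw [map_add]; exact add_mem hx hy
  | smul c x _ hx =>
      rw [LinearMap.map_smulₛₗ]
      exact Submodule.smul_mem _ _ hx

lemma mem_map_conjC {F : Submodule ℂ (ℂ ⊗[ℝ] V)} {x : ℂ ⊗[ℝ] V} :
    x ∈ F.map (conjC V) ↔ conjC V x ∈ F := by
  constructor
  · rintro ⟨y, hy, rfl⟩; rwa [conjC_conjC_s4]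
  · intro hx; exact ⟨conjC V x, hx, conjC_conjC_s4 x⟩


variable {W : ℤ → Submodule ℝ V} {F : ℤ → Submodule ℂ (ℂ ⊗[ℝ] V)}

lemma corr (h : IsRMHS W F) (q p : ℤ) (m : ℤ) (hm : m ≤ q + p - 1)
    (z s : ℂ ⊗[ℝ] V) (hz1 : z ∈ cx V (W (q + p))) (hz2 : z ∈ F q)
    (hs : s ∈ Lpq W F q p) (he : z - s ∈ cx V (W m)) :
    ∃ y ∈ Ipq W F q p, z - y ∈ cx V (W (q + p - 1)) := by
  obtain ⟨a, ha⟩ := h.w_bot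
  have base : ∀ z s : ℂ ⊗[ℝ] V, z ∈ cx V (W (q + p)) → z ∈ F q → s ∈ Lpq W F q p →
      z - s = 0 → ∃ y ∈ Ipq W F q p, z - y ∈ cx V (W (q + p - 1)) := by
    intro z s hz1 hz2 hs hzs
    have hzseq : z = s := sub_eq_zero.1 hzs
    refine ⟨z, ⟨⟨hz1, hz2⟩, hzseq ▸ hs⟩, ?_⟩
    simp
  have key : ∀ m : ℤ, a ≤ m → m ≤ q + p - 1 →
      ∀ z s : ℂ ⊗[ℝ] V, z ∈ cx V (W (q + p)) → z ∈ F q → s ∈ Lpq W F q p →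
      z - s ∈ cx V (W m) → ∃ y ∈ Ipq W F q p, z - y ∈ cx V (W (q + p - 1)) := by
    refine fun m => Int.le_induction
      (motive := fun m _ => m ≤ q + p - 1 →
        ∀ z s : ℂ ⊗[ℝ] V, z ∈ cx V (W (q + p)) → z ∈ F q → s ∈ Lpq W F q p →
        z - s ∈ cx V (W m) → ∃ y ∈ Ipq W F q p, z - y ∈ cx V (W (q + p - 1))) ?_ ?_ m
    · intro _ z s hz1 hz2 hs he
      rw [ha a le_rfl, cx_bot_s4, Submodule.mem_bot] at he
      exact base z s hz1 hz2 hs he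
    · intro m ham ih hm z s hz1 hz2 hs he
      rw [← h.gr_sup (m+1) q] at he
      obtain ⟨f, hf, t, ht, hft⟩ := Submodule.mem_sup.1 he
      obtain ⟨v, hv, e', he', hve⟩ := Submodule.mem_sup.1 ht
      have hm1 : (m + 1 - 1 : ℤ) = m := by ring
      rw [hm1] at he'
      -- v belongs to Lpq W F q p
      have hvL : v ∈ Lpq W F q p := by
        rcases eq_or_lt_of_le hm with hc | hc
        · -- m + 1 = q + p - 1 is impossible branch split: here m = q+p-2? no: hm : m+1 ≤ q+p-1
          -- i = q+p-(m+1); i=1 ↔ m+1 = q+p-1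
          apply Submodule.mem_sup_left
          refine ⟨cx_mono_s4 (h.monoW (by omega)) hv.2, ?_⟩
          have : F (m+1+1-q) ≤ F p := h.antiF (by omega)
          exact Submodule.map_mono this hv.1
        · apply Submodule.mem_sup_right
          set i : ℤ := q + p - (m + 1) with hi
          have h2i : 2 ≤ i := by omega
          have hle := le_iSup₂ (f := fun (i : ℤ) (_ : 2 ≤ i) =>
            cx V (W (q + p - i)) ⊓ (F (p - i + 1)).map (conjC V)) i h2i
          have h1 : q + p - i = m + 1 := by omega
          have h2 : p - i + 1 = m + 1 + 1 - q := by omega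
          rw [h1, h2] at hle
          exact hle ⟨hv.2, hv.1⟩
      have hz'1 : z - f ∈ cx V (W (q + p)) :=
        sub_mem hz1 (cx_mono_s4 (h.monoW (by omega)) hf.2)
      have hz'2 : z - f ∈ F q := sub_mem hz2 hf.1
      have hs'L : s + v ∈ Lpq W F q p := add_mem hs hvL
      have hzdec : z = f + (v + e') + s := by rw [← hve] at hft; rw [hft]; abel
      have he'' : (z - f) - (s + v) ∈ cx V (W m) := by
        have heq : (z - f) - (s + v) = e' := by rw [hzdec]; abel
        rw [heq]; exact he'
      obtain ⟨y, hy, hzy⟩ := ih (by omega) (z - f) (s + v) hz'1 hz'2 hs'L he''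
      refine ⟨y, hy, ?_⟩
      have heq2 : z - y = ((z - f) - y) + f := by abel
      rw [heq2]
      exact add_mem hzy (cx_mono_s4 (h.monoW (by omega)) hf.2)
  by_cases ham : a ≤ m
  · exact key m ham hm z s hz1 hz2 hs he
  · have : cx V (W m) ≤ cx V (W a) := cx_mono_s4 (h.monoW (by omega))
    rw [ha a le_rfl, cx_bot_s4] at this
    exact base z s hz1 hz2 hs (Submodule.mem_bot _ |>.1 (this he))

lemma Fdec (h : IsRMHS W F) (m r : ℤ) :
    F r ⊓ cx V (W m) ≤
      (⨆ r' : ℤ, ⨆ _ : r ≤ r', Ipq W F r' (m - r')) ⊔ cx V (W (m - 1)) := by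
  obtain ⟨b, hb⟩ := h.f_bot
  have key : ∀ r : ℤ, r ≤ b → F r ⊓ cx V (W m) ≤
      (⨆ r' : ℤ, ⨆ _ : r ≤ r', Ipq W F r' (m - r')) ⊔ cx V (W (m - 1)) := by
    refine fun r => Int.le_induction_down
      (motive := fun r _ => F r ⊓ cx V (W m) ≤
        (⨆ r' : ℤ, ⨆ _ : r ≤ r', Ipq W F r' (m - r')) ⊔ cx V (W (m - 1))) ?_ ?_ r
    · show F b ⊓ cx V (W m) ≤ _
      rw [hb b le_rfl, bot_inf_eq]
      exact bot_le
    · intro r hr ih x hx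
      -- decompose x using gr_sup m r
      have hx2 : x ∈ cx V (W m) := hx.2
      rw [← h.gr_sup m r] at hx2
      obtain ⟨u, hu, t, ht, hut⟩ := Submodule.mem_sup.1 hx2
      obtain ⟨v, hv, e, he, hve⟩ := Submodule.mem_sup.1 ht
      have e1 : (r - 1) + (m - (r - 1)) = m := by ring
      have e2 : m - (r - 1) = m + 1 - r := by ring
      -- z := x - u
      have hz1 : x - u ∈ cx V (W ((r - 1) + (m - (r - 1)))) := by
        rw [e1]; exact sub_mem hx.2 hu.2
      have hz2 : x - u ∈ F (r - 1) := sub_mem hx.1 (h.antiF (by omega) hu.1)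
      have hsv : v ∈ Lpq W F (r - 1) (m - (r - 1)) := by
        apply Submodule.mem_sup_left
        rw [e1, e2]
        exact ⟨hv.2, hv.1⟩
      have he2 : (x - u) - v ∈ cx V (W (m - 1)) := by
        have : (x - u) - v = e := by
          rw [← hve] at hut; rw [← hut]; abel
        rw [this]; exact he
      obtain ⟨y, hy, hzy⟩ := corr h (r - 1) (m - (r - 1)) (m - 1) (by omega)
        (x - u) v hz1 hz2 hsv he2
      rw [e1] at hzy
      -- x = u + y + ((x - u) - y)
      have hxdec : x = u + (y + ((x - u) - y)) := by abel
      rw [hxdec]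
      have hu' := ih ⟨hu.1, hu.2⟩
      refine add_mem ?_ (add_mem ?_ ?_)
      · -- u is in the sup over r' ≥ r, enlarge to r' ≥ r - 1
        have hmono : (⨆ r' : ℤ, ⨆ _ : r ≤ r', Ipq W F r' (m - r')) ⊔ cx V (W (m - 1)) ≤
            (⨆ r' : ℤ, ⨆ _ : r - 1 ≤ r', Ipq W F r' (m - r')) ⊔ cx V (W (m - 1)) := by
          refine sup_le_sup_right (iSup₂_le fun r' hr' => ?_) _
          exact le_iSup₂ (f := fun (r' : ℤ) (_ : r - 1 ≤ r') => Ipq W F r' (m - r')) r'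
            (by omega)
        exact hmono hu'
      · exact Submodule.mem_sup_left (le_iSup₂ (f := fun (r' : ℤ) (_ : r - 1 ≤ r') =>
          Ipq W F r' (m - r')) (r - 1) le_rfl hy)
      · exact Submodule.mem_sup_right hzy
  by_cases hrb : r ≤ b
  · exact key r hrb
  · rw [hb r (by omega), bot_inf_eq]
    exact bot_le

lemma Ssum (h : IsRMHS W F) (m : ℤ) :
    cx V (W m) ≤ ⨆ rs : ℤ × ℤ, ⨆ _ : rs.1 + rs.2 ≤ m, Ipq W F rs.1 rs.2 := by
  obtain ⟨a, ha⟩ := h.w_bot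
  have Smono : ∀ c c' : ℤ, c ≤ c' →
      (⨆ rs : ℤ × ℤ, ⨆ _ : rs.1 + rs.2 ≤ c, Ipq W F rs.1 rs.2) ≤
      (⨆ rs : ℤ × ℤ, ⨆ _ : rs.1 + rs.2 ≤ c', Ipq W F rs.1 rs.2) := by
    intro c c' hcc
    refine iSup₂_le fun rs hrs => ?_
    exact le_iSup₂ (f := fun (rs : ℤ × ℤ) (_ : rs.1 + rs.2 ≤ c') => Ipq W F rs.1 rs.2)
      rs (by omega)
  have key : ∀ m : ℤ, a ≤ m →
      cx V (W m) ≤ ⨆ rs : ℤ × ℤ, ⨆ _ : rs.1 + rs.2 ≤ m, Ipq W F rs.1 rs.2 := by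
    refine fun m => Int.le_induction
      (motive := fun m _ => cx V (W m) ≤ ⨆ rs : ℤ × ℤ, ⨆ _ : rs.1 + rs.2 ≤ m, Ipq W F rs.1 rs.2)
      ?_ ?_ m
    · show cx V (W a) ≤ _
      rw [ha a le_rfl, cx_bot_s4]; exact bot_le
    · intro m ham ih x hx
      obtain ⟨t, htop⟩ := h.f_top
      have hxF : x ∈ F t ⊓ cx V (W (m + 1)) := by
        rw [htop t le_rfl]
        exact ⟨trivial, hx⟩
      have := Fdec h (m + 1) t hxF
      obtain ⟨u, hu, e, he, hue⟩ := Submodule.mem_sup.1 this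
      have hm1 : (m + 1 - 1 : ℤ) = m := by ring
      rw [hm1] at he
      rw [← hue]
      refine add_mem ?_ ?_
      · have hmono : (⨆ r' : ℤ, ⨆ _ : t ≤ r', Ipq W F r' (m + 1 - r')) ≤
            ⨆ rs : ℤ × ℤ, ⨆ _ : rs.1 + rs.2 ≤ m + 1, Ipq W F rs.1 rs.2 := by
          refine iSup₂_le fun r' _ => ?_
          exact le_iSup₂ (f := fun (rs : ℤ × ℤ) (_ : rs.1 + rs.2 ≤ m + 1) =>
            Ipq W F rs.1 rs.2) (r', m + 1 - r') (by omega)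
        exact hmono hu
      · exact Smono m (m + 1) (by omega) (ih he)
  by_cases ham : a ≤ m
  · exact key m ham
  · have : cx V (W m) ≤ cx V (W a) := cx_mono_s4 (h.monoW (by omega))
    rw [ha a le_rfl, cx_bot_s4] at this
    exact le_trans this bot_le

end MHS

/-- For an `ℝ`-mixed Hodge structure `(W, F)` on `V`, the
conjugate of the Deligne subspace `I^{p,q}` is congruent to `I^{q,p}` modulo
the sum of the Deligne subspaces of strictly smaller total weight:
`σ(I^{p,q}) ⊆ I^{q,p} + Σ_{r+s < p+q} I^{r,s}`. -/
theorem deligne_splitting_conj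
    (V : Type*) [AddCommGroup V] [Module ℝ V] [FiniteDimensional ℝ V]
    (W : ℤ → Submodule ℝ V) (F : ℤ → Submodule ℂ (ℂ ⊗[ℝ] V))
    (h : MHS.IsRMHS W F) :
    ∀ p q : ℤ, (MHS.Ipq W F p q).map (MHS.conjC V) ≤
      MHS.Ipq W F q p ⊔
        ⨆ rs : ℤ × ℤ, ⨆ _ : rs.1 + rs.2 < p + q, MHS.Ipq W F rs.1 rs.2 := by
  intro p q x hx
  obtain ⟨x₀, hx₀, rfl⟩ := hx
  obtain ⟨hR, hL⟩ := hx₀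
  obtain ⟨a₀, ha₀, b₀, hb₀, hab⟩ := Submodule.mem_sup.1 hL
  have hqp : q + p = p + q := by ring
  have hb₀' : b₀ ∈ MHS.cx V (W (p + q - 2)) := by
    have hle : (⨆ i : ℤ, ⨆ _ : 2 ≤ i,
        (MHS.cx V (W (p + q - i)) ⊓ (F (q - i + 1)).map (MHS.conjC V)))
        ≤ MHS.cx V (W (p + q - 2)) :=
      iSup₂_le fun i hi => le_trans inf_le_left (MHS.cx_mono_s4 (h.monoW (by omega)))
    exact hle hb₀
  have hz1 : MHS.conjC V a₀ ∈ MHS.cx V (W (q + p)) := by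
    rw [hqp]; exact MHS.conjC_mem_cx ha₀.1
  have hz2 : MHS.conjC V a₀ ∈ F q := MHS.mem_map_conjC.1 ha₀.2
  have hs : MHS.conjC V x₀ ∈ MHS.Lpq W F q p := by
    apply Submodule.mem_sup_left
    refine ⟨by rw [hqp]; exact MHS.conjC_mem_cx hR.1, ?_⟩
    exact MHS.mem_map_conjC.2 (by rw [MHS.conjC_conjC_s4]; exact hR.2)
  have he : MHS.conjC V a₀ - MHS.conjC V x₀ ∈ MHS.cx V (W (q + p - 1)) := by
    have h1 : MHS.conjC V a₀ - MHS.conjC V x₀ = - MHS.conjC V b₀ := by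
      rw [← map_sub]
      have h2 : a₀ - x₀ = -b₀ := by rw [← hab]; abel
      rw [h2, map_neg]
    rw [h1]
    exact neg_mem (MHS.cx_mono_s4 (h.monoW (by omega)) (MHS.conjC_mem_cx hb₀'))
  obtain ⟨y, hy, hzy⟩ := MHS.corr h q p (q + p - 1) le_rfl _ _ hz1 hz2 hs he
  have hrest : (MHS.conjC V a₀ - y) + MHS.conjC V b₀ ∈
      ⨆ rs : ℤ × ℤ, ⨆ _ : rs.1 + rs.2 < p + q, MHS.Ipq W F rs.1 rs.2 := by
    have hc : (MHS.conjC V a₀ - y) + MHS.conjC V b₀ ∈ MHS.cx V (W (q + p - 1)) :=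
      add_mem hzy (MHS.cx_mono_s4 (h.monoW (by omega)) (MHS.conjC_mem_cx hb₀'))
    have hmono : (⨆ rs : ℤ × ℤ, ⨆ _ : rs.1 + rs.2 ≤ q + p - 1, MHS.Ipq W F rs.1 rs.2) ≤
        ⨆ rs : ℤ × ℤ, ⨆ _ : rs.1 + rs.2 < p + q, MHS.Ipq W F rs.1 rs.2 := by
      refine iSup₂_le fun rs hrs => ?_
      exact le_iSup₂ (f := fun (rs : ℤ × ℤ) (_ : rs.1 + rs.2 < p + q) =>
        MHS.Ipq W F rs.1 rs.2) rs (by omega)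
    exact hmono (MHS.Ssum h (q + p - 1) hc)
  have hdec : MHS.conjC V x₀ = y + ((MHS.conjC V a₀ - y) + MHS.conjC V b₀) := by
    have h3 : MHS.conjC V x₀ = MHS.conjC V a₀ + MHS.conjC V b₀ := by rw [← hab, map_add]
    rw [h3]; abel
  rw [hdec]
  exact add_mem (Submodule.mem_sup_left hy) (Submodule.mem_sup_right hrest)
end
end
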